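/- The ideal I = (xy, 3y + x²) in ℂ[[x,y]] equals the ideal J of all power series a with a(0,0) = 0 and intersection multiplicity mult₍₀,₀₎(a, 3y + x²) ≥ 3, i.e. the order of a(t, −t²/3) in ℂ[[t]] is at least 3. -/

import Mathlib

noncomputable section

def px : MvPowerSeries (Fin 2) ℂ := MvPowerSeries.X 0
def py : MvPowerSeries (Fin 2) ℂ := MvPowerSeries.X 1

namespace Stmt15Aux

open MvPowerSeries Finsupp

def D (m j : ℕ) : Fin 2 →₀ ℕ := Finsupp.single 0 m + Finsupp.single 1 j

lemma D_apply0 (m j : ℕ) : D m j 0 = m := by simp [D, Finsupp.single_apply]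

lemma D_apply1 (m j : ℕ) : D m j 1 = j := by simp [D, Finsupp.single_apply]

lemma D_eq (d : Fin 2 →₀ ℕ) : D (d 0) (d 1) = d := by
  ext i; fin_cases i
  · exact D_apply0 _ _
  · exact D_apply1 _ _

lemma D_le {m j m' j' : ℕ} : D m j ≤ D m' j' ↔ m ≤ m' ∧ j ≤ j' := by
  rw [Finsupp.le_def]
  constructor
  · intro h
    have h0 := h 0; have h1 := h 1
    rw [D_apply0, D_apply0] at h0; rw [D_apply1, D_apply1] at h1
    exact ⟨h0, h1⟩
  · rintro ⟨h0, h1⟩ i; fin_cases i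
    · simpa [D_apply0] using h0
    · simpa [D_apply1] using h1

lemma D_sub (m j m' j' : ℕ) : D m' j' - D m j = D (m' - m) (j' - j) := by
  ext i; fin_cases i
  · simp [Finsupp.tsub_apply, D_apply0]
  · simp [Finsupp.tsub_apply, D_apply1]

/-- coefficient at `(m,j)` -/
def cf (a : MvPowerSeries (Fin 2) ℂ) (m j : ℕ) : ℂ := MvPowerSeries.coeff (R := ℂ) (D m j) a

lemma cf00 (a : MvPowerSeries (Fin 2) ℂ) :
    MvPowerSeries.constantCoeff (σ := Fin 2) (R := ℂ) a = cf a 0 0 := by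
  rw [cf, show D 0 0 = 0 by simp [D], MvPowerSeries.coeff_zero_eq_constantCoeff]

/-- substitution `a(t, -t²/3)` coefficients -/
def S (a : MvPowerSeries (Fin 2) ℂ) (m : ℕ) : ℂ :=
  ∑ k ∈ Finset.range (m / 2 + 1), cf a (m - 2 * k) k * ((-1 : ℂ) / 3) ^ k

lemma S0 (a : MvPowerSeries (Fin 2) ℂ) : S a 0 = cf a 0 0 := by rw [S]; norm_num

lemma S1 (a : MvPowerSeries (Fin 2) ℂ) : S a 1 = cf a 1 0 := by rw [S]; norm_num

lemma S2 (a : MvPowerSeries (Fin 2) ℂ) : S a 2 = cf a 2 0 + cf a 0 1 * ((-1 : ℂ) / 3) := by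
  rw [S, show (2 / 2 + 1 : ℕ) = 2 from rfl, Finset.sum_range_succ, Finset.sum_range_succ,
    Finset.sum_range_zero]
  norm_num

lemma hs (a : MvPowerSeries (Fin 2) ℂ) (n : ℕ) (hn : n < 3) :
    (∑ p ∈ Finset.range (n + 1) ×ˢ Finset.range (n + 1),
      MvPowerSeries.coeff (R := ℂ) (Finsupp.single 0 p.1 + Finsupp.single 1 p.2) a *
        (if p.1 + 2 * p.2 = n then (-(1 : ℂ) / 3) ^ p.2 else 0) = S a n) := by
  interval_cases n
  · rw [S0]; norm_num [cf, D, Finset.sum_product, Finset.sum_range_succ]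
  · rw [S1]; norm_num [cf, D, Finset.sum_product, Finset.sum_range_succ]
  · rw [S2]; norm_num [cf, D, Finset.sum_product, Finset.sum_range_succ]; ring

lemma pxpy_eq : px * py = MvPowerSeries.monomial (R := ℂ) (D 1 1) 1 := by
  rw [px, py, X_def, X_def, monomial_mul_monomial, one_mul, D]

lemma py_eq : py = MvPowerSeries.monomial (R := ℂ) (D 0 1) 1 := by
  rw [py, X_def, D, Finsupp.single_zero, zero_add]

lemma px2_eq : px ^ 2 = MvPowerSeries.monomial (R := ℂ) (D 2 0) 1 := by
  rw [px, X_pow_eq, D, Finsupp.single_zero, add_zero]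

lemma cf_mul_monomial (g : MvPowerSeries (Fin 2) ℂ) (e1 e2 : ℕ) (c : ℂ) (m j : ℕ) :
    cf (g * MvPowerSeries.monomial (R := ℂ) (D e1 e2) c) m j =
      if e1 ≤ m ∧ e2 ≤ j then cf g (m - e1) (j - e2) * c else 0 := by
  rw [cf, coeff_mul_monomial, D_sub]
  by_cases h : e1 ≤ m ∧ e2 ≤ j
  · rw [if_pos h, if_pos (D_le.2 h)]; rfl
  · rw [if_neg h, if_neg (fun hc => h (D_le.1 hc))]

lemma cf_mul_xy (g : MvPowerSeries (Fin 2) ℂ) (m j : ℕ) :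
    cf (g * (px * py)) m j = if 1 ≤ m ∧ 1 ≤ j then cf g (m - 1) (j - 1) else 0 := by
  rw [pxpy_eq, cf_mul_monomial]
  by_cases h : 1 ≤ m ∧ 1 ≤ j <;> simp [h]

lemma three_eq : (3 : MvPowerSeries (Fin 2) ℂ) = MvPowerSeries.C (σ := Fin 2) (R := ℂ) 3 :=
  (map_ofNat (MvPowerSeries.C (σ := Fin 2) (R := ℂ)) 3).symm

lemma cf_three_mul (g : MvPowerSeries (Fin 2) ℂ) (m j : ℕ) :
    cf (3 * g) m j = 3 * cf g m j := by
  rw [cf, cf, three_eq, coeff_C_mul]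

lemma cf_mul_I2 (g : MvPowerSeries (Fin 2) ℂ) (m j : ℕ) :
    cf (g * (3 * py + px ^ 2)) m j =
      3 * (if 1 ≤ j then cf g m (j - 1) else 0) + (if 2 ≤ m then cf g (m - 2) j else 0) := by
  have h : g * (3 * py + px ^ 2) = 3 * (g * py) + g * px ^ 2 := by ring
  rw [h, cf, map_add, ← cf, ← cf, cf_three_mul, py_eq, px2_eq, cf_mul_monomial,
    cf_mul_monomial]
  congr 1
  · congr 1
    by_cases h : 1 ≤ j <;> simp [h]
  · by_cases h : 2 ≤ m <;> simp [h]

lemma cf_add (u v : MvPowerSeries (Fin 2) ℂ) (m j : ℕ) :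
    cf (u + v) m j = cf u m j + cf v m j := by
  simp [cf]

lemma cf_sub (u v : MvPowerSeries (Fin 2) ℂ) (m j : ℕ) :
    cf (u - v) m j = cf u m j - cf v m j := by
  simp [cf]

end Stmt15Aux

open Stmt15Aux

theorem stmt_15 (a : MvPowerSeries (Fin 2) ℂ) :
    a ∈ Ideal.span {px * py, 3 * py + px ^ 2} ↔
      ((MvPowerSeries.constantCoeff (σ := Fin 2) (R := ℂ)) a = 0 ∧
        ∀ n < 3, ∑ p ∈ Finset.range (n + 1) ×ˢ Finset.range (n + 1),
          MvPowerSeries.coeff (R := ℂ) (Finsupp.single 0 p.1 + Finsupp.single 1 p.2) a *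
            (if p.1 + 2 * p.2 = n then (-(1 : ℂ) / 3) ^ p.2 else 0) = 0) := by
  constructor
  · -- forward
    intro h
    obtain ⟨u, v, huv⟩ := Ideal.mem_span_pair.mp h
    have hcf : ∀ m j, cf a m j = cf (u * (px * py)) m j + cf (v * (3 * py + px ^ 2)) m j := by
      intro m j; rw [← huv, cf_add]
    have c00 : cf a 0 0 = 0 := by
      rw [hcf, cf_mul_xy, cf_mul_I2]; norm_num
    have c10 : cf a 1 0 = 0 := by
      rw [hcf, cf_mul_xy, cf_mul_I2]; norm_num
    have c20 : cf a 2 0 = cf v 0 0 := by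
      rw [hcf, cf_mul_xy, cf_mul_I2]; norm_num
    have c01 : cf a 0 1 = 3 * cf v 0 0 := by
      rw [hcf, cf_mul_xy, cf_mul_I2]; norm_num
    refine ⟨by rw [cf00, c00], fun n hn => ?_⟩
    rw [hs a n hn]
    interval_cases n
    · rw [S0, c00]
    · rw [S1, c10]
    · rw [S2, c20, c01]; ring
  · -- reverse
    rintro ⟨h0, hsum⟩
    have hS : ∀ n, n < 3 → S a n = 0 := fun n hn => by rw [← hs a n hn]; exact hsum n hn
    set f : MvPowerSeries (Fin 2) ℂ :=
      fun d => if d 1 = 0 then -3 * S a (d 0 + 3) else 0 with hf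
    have cf_f : ∀ m j, cf f m j = if j = 0 then -3 * S a (m + 3) else 0 := by
      intro m j
      rw [cf, MvPowerSeries.coeff_apply, hf]
      simp only [D_apply0, D_apply1]
    set b : MvPowerSeries (Fin 2) ℂ := a - f * (px * py) with hbdef
    have cf_b : ∀ m j, cf b m j = cf a m j - cf (f * (px * py)) m j := by
      intro m j; rw [hbdef, cf_sub]
    have hSb : ∀ m, S b m = 0 := by
      intro m
      have hsplit : S b m = S a m - S (f * (px * py)) m := by
        rw [S, S, S, ← Finset.sum_sub_distrib]
        exact Finset.sum_congr rfl fun k _ => by rw [cf_b]; ring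
      have hfxy : S (f * (px * py)) m = if 3 ≤ m then S a m else 0 := by
        rw [S]
        by_cases hm : 3 ≤ m
        · rw [if_pos hm]
          rw [Finset.sum_eq_single 1]
          · rw [cf_mul_xy, if_pos ⟨by omega, le_refl 1⟩, cf_f,
              if_pos (by norm_num : (1 : ℕ) - 1 = 0),
              show m - 2 * 1 - 1 + 3 = m by omega]
            ring
          · intro k hk hk1
            rw [cf_mul_xy]
            by_cases hcond : 1 ≤ m - 2 * k ∧ 1 ≤ k
            · rw [if_pos hcond, cf_f, if_neg (by omega), zero_mul]
            · rw [if_neg hcond, zero_mul]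
          · intro h1
            exact absurd (Finset.mem_range.2 (by omega)) h1
        · rw [if_neg hm]
          apply Finset.sum_eq_zero
          intro k hk
          rw [cf_mul_xy]
          by_cases hcond : 1 ≤ m - 2 * k ∧ 1 ≤ k
          · exact absurd hcond (by omega)
          · rw [if_neg hcond, zero_mul]
      rw [hsplit, hfxy]
      by_cases hm : 3 ≤ m
      · rw [if_pos hm]; ring
      · rw [if_neg hm, hS m (by omega), sub_zero]
    set q : MvPowerSeries (Fin 2) ℂ :=
      fun d => ∑ k ∈ Finset.range (d 0 / 2 + 1),
        (-1 : ℂ) ^ k / 3 ^ (k + 1) * cf b (d 0 - 2 * k) (d 1 + 1 + k) with hq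
    have cf_q : ∀ m j, cf q m j = ∑ k ∈ Finset.range (m / 2 + 1),
        (-1 : ℂ) ^ k / 3 ^ (k + 1) * cf b (m - 2 * k) (j + 1 + k) := by
      intro m j
      rw [cf, MvPowerSeries.coeff_apply, hq]
      simp only [D_apply0, D_apply1]
    have main : ∀ m j, cf (q * (3 * py + px ^ 2)) m j = cf b m j := by
      intro m j
      rw [cf_mul_I2]
      match j with
      | 0 =>
        rw [if_neg (by omega : ¬ (1 : ℕ) ≤ 0), mul_zero, zero_add]
        by_cases hm : 2 ≤ m
        · rw [if_pos hm, cf_q]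
          have h := hSb m
          rw [S, Finset.sum_range_succ'] at h
          rw [show (m - 2) / 2 + 1 = m / 2 by omega]
          have hterm : ∀ k ∈ Finset.range (m / 2),
              (-1 : ℂ) ^ k / 3 ^ (k + 1) * cf b (m - 2 - 2 * k) (0 + 1 + k)
                = -(cf b (m - 2 * (k + 1)) (k + 1) * ((-1 : ℂ) / 3) ^ (k + 1)) := by
            intro k hk
            rw [show m - 2 - 2 * k = m - 2 * (k + 1) by omega,
              show 0 + 1 + k = k + 1 by omega, div_pow, pow_succ, pow_succ]
            ring
          rw [Finset.sum_congr rfl hterm, Finset.sum_neg_distrib]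
          have hm0 : m - 2 * 0 = m := by omega
          rw [hm0] at h
          linear_combination -h
        · rw [if_neg hm]
          have h := hSb m
          interval_cases m
          · rw [S0] at h; rw [← h]
          · rw [S1] at h; rw [← h]
      | j' + 1 =>
        rw [if_pos (by omega : 1 ≤ j' + 1), Nat.add_sub_cancel, cf_q]
        by_cases hm : 2 ≤ m
        · rw [if_pos hm, cf_q, show (m - 2) / 2 + 1 = m / 2 by omega,
            Finset.mul_sum, Finset.sum_range_succ']
          have hterm : ∀ k ∈ Finset.range (m / 2),
              (-1 : ℂ) ^ k / 3 ^ (k + 1) * cf b (m - 2 - 2 * k) (j' + 1 + 1 + k)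
                = -(3 * ((-1 : ℂ) ^ (k + 1) / 3 ^ (k + 1 + 1)
                    * cf b (m - 2 * (k + 1)) (j' + 1 + (k + 1)))) := by
            intro k hk
            rw [show m - 2 - 2 * k = m - 2 * (k + 1) by omega,
              show j' + 1 + 1 + k = j' + 1 + (k + 1) by omega, pow_succ, pow_succ, pow_succ]
            field_simp
            ring
          rw [Finset.sum_congr rfl hterm, Finset.sum_neg_distrib]
          have hm0 : m - 2 * 0 = m := by omega
          rw [hm0]
          ring_nf
          simp only [show ∀ x, 2 + x + j' = 2 + j' + x from fun x => by omega] -- may not be needed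
          ring
        · rw [if_neg hm, show m / 2 = 0 by omega, Finset.sum_range_one]
          norm_num
          ring
    have hqb : q * (3 * py + px ^ 2) = b := by
      apply MvPowerSeries.ext
      intro d
      have h := main (d 0) (d 1)
      rw [cf, cf, D_eq] at h
      exact h
    exact Ideal.mem_span_pair.mpr ⟨f, q, by rw [hqb, hbdef]; ring⟩

end
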